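/- In the quadratic dual algebra A^!_τ = ℂ⟨ξ,η,ζ⟩/(ξ²=η²=ξη+ηξ=ξζ+ζξ=ηζ+ζη=0, ζ² = -τ(ξη-ηξ)), each graded component of degree 0, 1, 2, 3 has dimension 1, 3, 3, 1 respectively, and the components of degree > 3 vanish. -/
import Mathlib

noncomputable section

/-- The relations of the quadratic dual algebra
`A^!_τ = ℂ⟨ξ,η,ζ⟩/(ξ²=η²=ξη+ηξ=ξζ+ζξ=ηζ+ζη=0, ζ²+τ(ξη-ηξ)=0)`,
with generators `ξ = ι 0`, `η = ι 1`, `ζ = ι 2`. -/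
inductive BRel (τ : ℂ) : FreeAlgebra ℂ (Fin 3) → FreeAlgebra ℂ (Fin 3) → Prop
  | xx : BRel τ (FreeAlgebra.ι ℂ 0 * FreeAlgebra.ι ℂ 0) 0
  | yy : BRel τ (FreeAlgebra.ι ℂ 1 * FreeAlgebra.ι ℂ 1) 0
  | xy : BRel τ (FreeAlgebra.ι ℂ 0 * FreeAlgebra.ι ℂ 1 + FreeAlgebra.ι ℂ 1 * FreeAlgebra.ι ℂ 0) 0
  | xz : BRel τ (FreeAlgebra.ι ℂ 0 * FreeAlgebra.ι ℂ 2 + FreeAlgebra.ι ℂ 2 * FreeAlgebra.ι ℂ 0) 0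
  | yz : BRel τ (FreeAlgebra.ι ℂ 1 * FreeAlgebra.ι ℂ 2 + FreeAlgebra.ι ℂ 2 * FreeAlgebra.ι ℂ 1) 0
  | zz : BRel τ (FreeAlgebra.ι ℂ 2 * FreeAlgebra.ι ℂ 2 +
      τ • (FreeAlgebra.ι ℂ 0 * FreeAlgebra.ι ℂ 1 - FreeAlgebra.ι ℂ 1 * FreeAlgebra.ι ℂ 0)) 0

/-- The quadratic dual algebra `A^!_τ`. -/
abbrev BTau (τ : ℂ) := RingQuot (BRel τ)

/-- The generators `ξ, η, ζ` of `A^!_τ`. -/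
def bgen (τ : ℂ) (i : Fin 3) : BTau τ := RingQuot.mkAlgHom ℂ (BRel τ) (FreeAlgebra.ι ℂ i)

/-- The degree-`n` component of `A^!_τ`: the span of all products of `n` generators. -/
def bcomp (τ : ℂ) (n : ℕ) : Submodule ℂ (BTau τ) :=
  Submodule.span ℂ ((fun l : List (Fin 3) => (l.map (bgen τ)).prod) '' {l | l.length = n})

/-! ### A faithful 8-dimensional matrix model -/

def XM : Matrix (Fin 8) (Fin 8) ℂ := Matrix.of fun i j =>
  if (i = 1 ∧ j = 0) ∨ (i = 4 ∧ j = 2) ∨ (i = 5 ∧ j = 3) ∨ (i = 7 ∧ j = 6) then 1 else 0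
def YM : Matrix (Fin 8) (Fin 8) ℂ := Matrix.of fun i j =>
  if (i = 2 ∧ j = 0) ∨ (i = 6 ∧ j = 3) then 1
  else if (i = 4 ∧ j = 1) ∨ (i = 7 ∧ j = 5) then -1 else 0
def ZM (τ : ℂ) : Matrix (Fin 8) (Fin 8) ℂ := Matrix.of fun i j =>
  if (i = 3 ∧ j = 0) ∨ (i = 7 ∧ j = 4) then 1
  else if (i = 5 ∧ j = 1) ∨ (i = 6 ∧ j = 2) then -1
  else if i = 4 ∧ j = 3 then -2*τ else 0

set_option maxHeartbeats 2000000 in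
lemma mXX : XM * XM = 0 := by
  ext i j; fin_cases i <;> fin_cases j <;>
    simp [XM, Matrix.mul_apply, Fin.sum_univ_eight]
set_option maxHeartbeats 2000000 in
lemma mYY : YM * YM = 0 := by
  ext i j; fin_cases i <;> fin_cases j <;>
    simp [YM, Matrix.mul_apply, Fin.sum_univ_eight]
set_option maxHeartbeats 2000000 in
lemma mXY : XM * YM + YM * XM = 0 := by
  ext i j; fin_cases i <;> fin_cases j <;>
    simp [XM, YM, Matrix.mul_apply, Fin.sum_univ_eight]
set_option maxHeartbeats 2000000 in
lemma mXZ (τ : ℂ) : XM * ZM τ + ZM τ * XM = 0 := by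
  ext i j; fin_cases i <;> fin_cases j <;>
    simp [XM, ZM, Matrix.mul_apply, Fin.sum_univ_eight]
set_option maxHeartbeats 2000000 in
lemma mYZ (τ : ℂ) : YM * ZM τ + ZM τ * YM = 0 := by
  ext i j; fin_cases i <;> fin_cases j <;>
    simp [YM, ZM, Matrix.mul_apply, Fin.sum_univ_eight]
set_option maxHeartbeats 2000000 in
lemma mZZ (τ : ℂ) : ZM τ * ZM τ + τ • (XM * YM - YM * XM) = 0 := by
  ext i j; fin_cases i <;> fin_cases j <;>
    simp [XM, YM, ZM, Matrix.mul_apply, Fin.sum_univ_eight] <;> ring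

def MM (τ : ℂ) : Fin 3 → Matrix (Fin 8) (Fin 8) ℂ := ![XM, YM, ZM τ]

lemma MM0 (τ : ℂ) : MM τ 0 = XM := rfl
lemma MM1 (τ : ℂ) : MM τ 1 = YM := rfl
lemma MM2 (τ : ℂ) : MM τ 2 = ZM τ := rfl

def φ (τ : ℂ) : BTau τ →ₐ[ℂ] Matrix (Fin 8) (Fin 8) ℂ :=
  RingQuot.liftAlgHom ℂ ⟨FreeAlgebra.lift ℂ (MM τ), by
    intro a b r
    induction r <;>
      simp only [map_mul, map_add, map_sub, map_smul, map_zero, FreeAlgebra.lift_ι_apply,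
        MM0, MM1, MM2]
    · exact mXX
    · exact mYY
    · exact mXY
    · exact mXZ τ
    · exact mYZ τ
    · exact mZZ τ⟩

lemma φ_gen (τ : ℂ) (i : Fin 3) : φ τ (bgen τ i) = MM τ i := by
  simp [φ, bgen, RingQuot.liftAlgHom_mkAlgHom_apply]

/-! ### Relations in `BTau` -/

variable {τ : ℂ}

private lemma negOf {R : Type*} [Ring R] [Algebra ℂ R] {A B : R} (h : A + B = 0) :
    B = (-1 : ℂ) • A := by
  rw [neg_one_smul]; exact eq_neg_of_add_eq_zero_right h

private lemma zzAux {R : Type*} [Ring R] [Algebra ℂ R] {t : ℂ} {Z P Q : R}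
    (h : Z + t • (P - Q) = 0) (h2 : Q = (-1 : ℂ) • P) : Z = (-(2*t) : ℂ) • P := by
  have : Z = -(t • (P - Q)) := eq_neg_of_add_eq_zero_left h
  rw [this, h2]
  module

lemma brel (a b : FreeAlgebra ℂ (Fin 3)) (h : BRel τ a b) :
    RingQuot.mkAlgHom ℂ (BRel τ) a = RingQuot.mkAlgHom ℂ (BRel τ) b :=
  RingQuot.mkAlgHom_rel ℂ h

lemma r00 : bgen τ 0 * bgen τ 0 = 0 := by
  simpa [bgen] using brel _ _ (BRel.xx (τ := τ))
lemma r11 : bgen τ 1 * bgen τ 1 = 0 := by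
  simpa [bgen] using brel _ _ (BRel.yy (τ := τ))
lemma r10 : bgen τ 1 * bgen τ 0 = (-1 : ℂ) • (bgen τ 0 * bgen τ 1) :=
  negOf (by simpa [bgen] using brel _ _ (BRel.xy (τ := τ)))
lemma r20 : bgen τ 2 * bgen τ 0 = (-1 : ℂ) • (bgen τ 0 * bgen τ 2) :=
  negOf (by simpa [bgen] using brel _ _ (BRel.xz (τ := τ)))
lemma r21 : bgen τ 2 * bgen τ 1 = (-1 : ℂ) • (bgen τ 1 * bgen τ 2) :=
  negOf (by simpa [bgen] using brel _ _ (BRel.yz (τ := τ)))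
lemma r22 : bgen τ 2 * bgen τ 2 = (-(2*τ) : ℂ) • (bgen τ 0 * bgen τ 1) :=
  zzAux (by simpa [bgen] using brel _ _ (BRel.zz (τ := τ))) r10

lemma g00 (t : BTau τ) : bgen τ 0 * (bgen τ 0 * t) = 0 := by
  rw [← mul_assoc, r00, zero_mul]
lemma g11 (t : BTau τ) : bgen τ 1 * (bgen τ 1 * t) = 0 := by
  rw [← mul_assoc, r11, zero_mul]
lemma g10 (t : BTau τ) : bgen τ 1 * (bgen τ 0 * t) = (-1 : ℂ) • (bgen τ 0 * (bgen τ 1 * t)) := by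
  rw [← mul_assoc, r10, smul_mul_assoc, mul_assoc]
lemma g20 (t : BTau τ) : bgen τ 2 * (bgen τ 0 * t) = (-1 : ℂ) • (bgen τ 0 * (bgen τ 2 * t)) := by
  rw [← mul_assoc, r20, smul_mul_assoc, mul_assoc]
lemma g21 (t : BTau τ) : bgen τ 2 * (bgen τ 1 * t) = (-1 : ℂ) • (bgen τ 1 * (bgen τ 2 * t)) := by
  rw [← mul_assoc, r21, smul_mul_assoc, mul_assoc]
lemma g22 (t : BTau τ) :
    bgen τ 2 * (bgen τ 2 * t) = (-(2*τ) : ℂ) • (bgen τ 0 * (bgen τ 1 * t)) := by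
  rw [← mul_assoc, r22, smul_mul_assoc, mul_assoc]

lemma fin3cases (a : Fin 3) : a = 0 ∨ a = 1 ∨ a = 2 := by omega

lemma prod3 (a b c : Fin 3) (t : BTau τ) : ∃ k : ℂ,
    bgen τ a * (bgen τ b * (bgen τ c * t)) = k • (bgen τ 0 * (bgen τ 1 * (bgen τ 2 * t))) := by
  rcases fin3cases a with rfl|rfl|rfl <;> rcases fin3cases b with rfl|rfl|rfl <;>
    rcases fin3cases c with rfl|rfl|rfl
  all_goals first
    | (refine ⟨0, ?_⟩
       simp [g00, g11, g10, g20, g21, g22, mul_zero, mul_smul_comm, smul_smul, smul_zero,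
         zero_smul]
       done)
    | (refine ⟨1, ?_⟩
       simp [g00, g11, g10, g20, g21, g22, mul_zero, mul_smul_comm, smul_smul, smul_zero,
         zero_smul]
       done)
    | (refine ⟨(-1 : ℂ), ?_⟩
       simp [g00, g11, g10, g20, g21, g22, mul_zero, mul_smul_comm, smul_smul, smul_zero,
         zero_smul]
       done)
    | (refine ⟨(-(2*τ) : ℂ), ?_⟩
       simp [g00, g11, g10, g20, g21, g22, mul_zero, mul_smul_comm, smul_smul, smul_zero,
         zero_smul]
       done)

lemma wmul (d : Fin 3) (t : BTau τ) :
    bgen τ 0 * (bgen τ 1 * (bgen τ 2 * (bgen τ d * t))) = 0 := by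
  rcases fin3cases d with rfl|rfl|rfl <;>
    simp [g00, g11, g10, g20, g21, g22, mul_zero, mul_smul_comm, smul_smul, smul_zero, zero_smul]

open Submodule

lemma bcomp0 : bcomp τ 0 = Submodule.span ℂ {(1 : BTau τ)} := by
  apply le_antisymm
  · rw [bcomp]
    refine span_le.2 ?_
    rintro v ⟨l, hl, rfl⟩
    simp only [Set.mem_setOf_eq, List.length_eq_zero_iff] at hl
    subst hl
    simp only [List.map_nil, List.prod_nil]
    exact Submodule.mem_span_singleton_self _
  · refine span_le.2 ?_
    rintro v rfl
    rw [bcomp]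
    exact subset_span ⟨[], rfl, by simp⟩

lemma bcomp1 : bcomp τ 1 =
    Submodule.span ℂ (Set.range ![bgen τ 0, bgen τ 1, bgen τ 2]) := by
  apply le_antisymm
  · rw [bcomp]
    refine span_le.2 ?_
    rintro v ⟨l, hl, rfl⟩
    simp only [Set.mem_setOf_eq] at hl
    rcases l with _ | ⟨a, _ | ⟨b, l⟩⟩ <;>
      simp only [List.length_cons, List.length_nil] at hl <;> try omega
    simp only [List.map_cons, List.map_nil, List.prod_cons, List.prod_nil, mul_one]
    rcases fin3cases a with rfl|rfl|rfl
    · exact subset_span ⟨0, rfl⟩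
    · exact subset_span ⟨1, rfl⟩
    · exact subset_span ⟨2, rfl⟩
  · refine span_le.2 ?_
    rintro v ⟨i, rfl⟩
    rw [bcomp]
    rcases fin3cases i with rfl|rfl|rfl
    · exact subset_span ⟨[0], rfl, by simp⟩
    · exact subset_span ⟨[1], rfl, by simp⟩
    · exact subset_span ⟨[2], rfl, by simp⟩

lemma bcomp2 : bcomp τ 2 = Submodule.span ℂ
    (Set.range ![bgen τ 0 * bgen τ 1, bgen τ 0 * bgen τ 2, bgen τ 1 * bgen τ 2]) := by
  apply le_antisymm
  · rw [bcomp]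
    refine span_le.2 ?_
    rintro v ⟨l, hl, rfl⟩
    simp only [Set.mem_setOf_eq] at hl
    rcases l with _ | ⟨a, _ | ⟨b, _ | ⟨c, l⟩⟩⟩ <;>
      simp only [List.length_cons, List.length_nil] at hl <;> try omega
    simp only [List.map_cons, List.map_nil, List.prod_cons, List.prod_nil, mul_one]
    rcases fin3cases a with rfl|rfl|rfl <;> rcases fin3cases b with rfl|rfl|rfl
    · rw [r00]; exact zero_mem _
    · exact subset_span ⟨0, rfl⟩
    · exact subset_span ⟨1, rfl⟩
    · rw [r10]; exact smul_mem _ _ (subset_span ⟨0, rfl⟩)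
    · rw [r11]; exact zero_mem _
    · exact subset_span ⟨2, rfl⟩
    · rw [r20]; exact smul_mem _ _ (subset_span ⟨1, rfl⟩)
    · rw [r21]; exact smul_mem _ _ (subset_span ⟨2, rfl⟩)
    · rw [r22]; exact smul_mem _ _ (subset_span ⟨0, rfl⟩)
  · refine span_le.2 ?_
    rintro v ⟨i, rfl⟩
    rw [bcomp]
    rcases fin3cases i with rfl|rfl|rfl
    · exact subset_span ⟨[0, 1], rfl, by simp⟩
    · exact subset_span ⟨[0, 2], rfl, by simp⟩
    · exact subset_span ⟨[1, 2], rfl, by simp⟩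

lemma bcomp3 : bcomp τ 3 =
    Submodule.span ℂ {bgen τ 0 * (bgen τ 1 * bgen τ 2)} := by
  apply le_antisymm
  · rw [bcomp]
    refine span_le.2 ?_
    rintro v ⟨l, hl, rfl⟩
    simp only [Set.mem_setOf_eq] at hl
    rcases l with _ | ⟨a, _ | ⟨b, _ | ⟨c, _ | ⟨d, l⟩⟩⟩⟩ <;>
      simp only [List.length_cons, List.length_nil] at hl <;> try omega
    simp only [List.map_cons, List.map_nil, List.prod_cons, List.prod_nil, mul_one]
    obtain ⟨k, hk⟩ := prod3 a b c (1 : BTau τ)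
    simp only [mul_one] at hk
    rw [hk]
    exact smul_mem _ _ (Submodule.mem_span_singleton_self _)
  · refine span_le.2 ?_
    rintro v rfl
    rw [bcomp]
    refine subset_span ⟨[0, 1, 2], rfl, by simp⟩

lemma bcomp_high (n : ℕ) (hn : 3 < n) : bcomp τ n = ⊥ := by
  rw [eq_bot_iff, bcomp]
  refine span_le.2 ?_
  rintro v ⟨l, hl, rfl⟩
  simp only [Set.mem_setOf_eq] at hl
  rcases l with _ | ⟨a, _ | ⟨b, _ | ⟨c, _ | ⟨d, l⟩⟩⟩⟩ <;>
    simp only [List.length_cons, List.length_nil] at hl <;> try omega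
  simp only [SetLike.mem_coe, Submodule.mem_bot, List.map_cons, List.prod_cons]
  obtain ⟨k, hk⟩ := prod3 a b c (bgen τ d * (l.map (bgen τ)).prod)
  rw [hk, wmul, smul_zero]

/-! ### Linear independence via the matrix model -/

lemma bone_ne_zero (τ : ℂ) : (1 : BTau τ) ≠ 0 := by
  intro h
  have h' := congrArg (φ τ) h
  simp only [map_one, map_zero] at h'
  have h00 := congrFun (congrFun h' 0) 0
  simp [Matrix.one_apply] at h00

lemma w_ne_zero (τ : ℂ) : bgen τ 0 * (bgen τ 1 * bgen τ 2) ≠ 0 := by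
  intro h
  have h' := congrArg (φ τ) h
  simp only [map_mul, map_zero, φ_gen, MM0, MM1, MM2] at h'
  have h70 := congrFun (congrFun h' 7) 0
  simp [XM, YM, ZM, Matrix.mul_apply, Fin.sum_univ_eight] at h70

lemma liM1 (τ : ℂ) : LinearIndependent ℂ ![XM, YM, ZM τ] := by
  rw [Fintype.linearIndependent_iff]
  intro g h
  rw [Fin.sum_univ_three] at h
  have h1 := congrFun (congrFun h 1) 0
  have h2 := congrFun (congrFun h 2) 0
  have h3 := congrFun (congrFun h 3) 0
  simp [XM, YM, ZM] at h1 h2 h3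
  intro i
  rcases fin3cases i with rfl|rfl|rfl <;> assumption

lemma li1 (τ : ℂ) : LinearIndependent ℂ ![bgen τ 0, bgen τ 1, bgen τ 2] := by
  have hc : ⇑(φ τ).toLinearMap ∘ ![bgen τ 0, bgen τ 1, bgen τ 2] = ![XM, YM, ZM τ] := by
    funext i
    rcases fin3cases i with rfl|rfl|rfl <;> simp [φ_gen, MM0, MM1, MM2]
  exact LinearIndependent.of_comp (φ τ).toLinearMap (hc ▸ liM1 τ)

set_option maxHeartbeats 1000000 in
lemma liM2 (τ : ℂ) : LinearIndependent ℂ ![XM * YM, XM * ZM τ, YM * ZM τ] := by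
  rw [Fintype.linearIndependent_iff]
  intro g h
  rw [Fin.sum_univ_three] at h
  have h1 := congrFun (congrFun h 4) 0
  have h2 := congrFun (congrFun h 5) 0
  have h3 := congrFun (congrFun h 6) 0
  simp [XM, YM, ZM, Matrix.mul_apply, Fin.sum_univ_eight] at h1 h2 h3
  intro i
  rcases fin3cases i with rfl|rfl|rfl <;> assumption

lemma li2 (τ : ℂ) : LinearIndependent ℂ
    ![bgen τ 0 * bgen τ 1, bgen τ 0 * bgen τ 2, bgen τ 1 * bgen τ 2] := by
  have hc : ⇑(φ τ).toLinearMap ∘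
      ![bgen τ 0 * bgen τ 1, bgen τ 0 * bgen τ 2, bgen τ 1 * bgen τ 2] =
      ![XM * YM, XM * ZM τ, YM * ZM τ] := by
    funext i
    rcases fin3cases i with rfl|rfl|rfl <;> simp [map_mul, φ_gen, MM0, MM1, MM2]
  exact LinearIndependent.of_comp (φ τ).toLinearMap (hc ▸ liM2 τ)

theorem stmt_13 (τ : ℂ) :
    Module.finrank ℂ (bcomp τ 0) = 1 ∧
    Module.finrank ℂ (bcomp τ 1) = 3 ∧
    Module.finrank ℂ (bcomp τ 2) = 3 ∧
    Module.finrank ℂ (bcomp τ 3) = 1 ∧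
    ∀ n : ℕ, 3 < n → bcomp τ n = ⊥ := by
  refine ⟨?_, ?_, ?_, ?_, fun n hn => bcomp_high n hn⟩
  · rw [bcomp0, finrank_span_singleton (bone_ne_zero τ)]
  · rw [bcomp1, finrank_span_eq_card (li1 τ)]
    simp
  · rw [bcomp2, finrank_span_eq_card (li2 τ)]
    simp
  · rw [bcomp3, finrank_span_singleton (w_ne_zero τ)]

end
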